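/- Let X, Y, Z be random variables taking values in finite sets 𝒳, 𝒴, 𝒵, respectively. For any z₁, z₂ ∈ 𝒵 with p := P(Z = z₁) > 0 and q := P(Z = z₂) > 0, the following holds: |H(X | Y, Z = z₁) − H(X | Y, Z = z₂)| ≤ 1 + 3 log₂|𝒳| · √( ((p + q) ln 2 / (2 p q)) · I((X, Y); Z) ), where H(X | Y, Z = zᵢ) denotes the conditional Shannon entropy of X given Y computed under the conditional probability measure given the event {Z = zᵢ}, all entropies and mutual informations measured in bits. -/

import Mathlib

open scoped BigOperators Classical

noncomputable section

namespace OT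

variable {Ω : Type*} [Fintype Ω]

/-- Probability of an event under a pmf on a finite sample space. -/
def pr (μ : Ω → ℝ) (s : Set Ω) : ℝ := ∑ ω, s.indicator μ ω

/-- `q` is a probability mass function on a finite type. -/
def isDist {α : Type*} [Fintype α] (q : α → ℝ) : Prop := (∀ a, 0 ≤ q a) ∧ ∑ a, q a = 1

/-- Distribution (pmf) of a random variable. -/
def dst {α : Type*} (μ : Ω → ℝ) (X : Ω → α) : α → ℝ := fun a => pr μ {ω | X ω = a}

/-- Joint distribution of two random variables. -/
def jd {α β : Type*} (μ : Ω → ℝ) (X : Ω → α) (Y : Ω → β) : α × β → ℝ :=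
  fun q => pr μ {ω | X ω = q.1 ∧ Y ω = q.2}

/-- Conditional pmf given an event. -/
def cnd (μ : Ω → ℝ) (s : Set Ω) : Ω → ℝ := fun ω => s.indicator μ ω / pr μ s

/-- Shannon entropy (in bits) of a pmf on a finite type. -/
def entD {α : Type*} [Fintype α] (q : α → ℝ) : ℝ := ∑ a, -(q a * Real.logb 2 (q a))

/-- Shannon entropy (in bits) of a random variable. -/
def ent {α : Type*} [Fintype α] (μ : Ω → ℝ) (X : Ω → α) : ℝ := entD (dst μ X)

/-- Conditional Shannon entropy `H(X|Y)` (in bits). -/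
def condEnt {α β : Type*} [Fintype α] [Fintype β] (μ : Ω → ℝ) (X : Ω → α) (Y : Ω → β) : ℝ :=
  ent μ (fun ω => (X ω, Y ω)) - ent μ Y

/-- Mutual information `I(X;Y)` (in bits). -/
def mi {α β : Type*} [Fintype α] [Fintype β] (μ : Ω → ℝ) (X : Ω → α) (Y : Ω → β) : ℝ :=
  ent μ X + ent μ Y - ent μ (fun ω => (X ω, Y ω))

/-- Conditional mutual information `I(X;Y|Z)` (in bits). -/
def cmi {α β γ : Type*} [Fintype α] [Fintype β] [Fintype γ]
    (μ : Ω → ℝ) (X : Ω → α) (Y : Ω → β) (Z : Ω → γ) : ℝ :=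
  ent μ (fun ω => (X ω, Z ω)) + ent μ (fun ω => (Y ω, Z ω))
    - ent μ (fun ω => (X ω, Y ω, Z ω)) - ent μ Z

/-- Rényi entropy of order two (in bits). -/
def ren2 {α : Type*} [Fintype α] (μ : Ω → ℝ) (X : Ω → α) : ℝ :=
  Real.logb 2 (1 / ∑ a, (dst μ X a) ^ 2)

/-- Statistical (total variation) distance between two pmfs. -/
def sd {α : Type*} [Fintype α] (q q' : α → ℝ) : ℝ := (∑ a, |q a - q' a|) / 2

/-- Conditional min-entropy `H∞(X|Y)` of a joint pmf (in bits):
the minimum over `(a,b)` in the support of `log₂ (P(Y=b) / P(X=a, Y=b))`. -/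
def minEnt {α β : Type*} [Fintype α] [Fintype β] (q : α × β → ℝ) : ℝ :=
  sInf {r | ∃ a b, 0 < q (a, b) ∧ r = Real.logb 2 ((∑ a', q (a', b)) / q (a, b))}

/-- `ε`-smooth conditional min-entropy of a joint pmf (in bits). -/
def sminEnt {α β : Type*} [Fintype α] [Fintype β] (q : α × β → ℝ) (ε : ℝ) : ℝ :=
  sSup {r | ∃ q' : α × β → ℝ, isDist q' ∧ sd q q' ≤ ε ∧ r = minEnt q'}

/-- Conditional zero-entropy `H₀(X|Y)` of a joint pmf (in bits). -/
def zeroEnt {α β : Type*} [Fintype α] [Fintype β] (q : α × β → ℝ) : ℝ :=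
  sSup {r | ∃ b, 0 < ∑ a, q (a, b) ∧
    r = Real.logb 2 ((Finset.univ.filter fun a => 0 < q (a, b)).card)}

end OT

open OT

section OTAuxSection
set_option linter.dupNamespace false
open Real Finset Set

namespace OTAux

lemma log_one_sub_bounds {x : ℝ} (hx0 : 0 ≤ x) (hx1 : x < 1) (n : ℕ) :
    -(∑ i ∈ Finset.range n, x ^ (i + 1) / (i + 1)) - x ^ (n + 1) / (1 - x) ≤ Real.log (1 - x) ∧
    Real.log (1 - x) ≤ -(∑ i ∈ Finset.range n, x ^ (i + 1) / (i + 1)) + x ^ (n + 1) / (1 - x) := by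
  have h : |x| < 1 := by rw [abs_of_nonneg hx0]; exact hx1
  have := Real.abs_log_sub_add_sum_range_le h n
  rw [abs_of_nonneg hx0] at this
  rw [abs_le] at this
  constructor <;> linarith [this.1, this.2]

lemma log_98_lb : (0.0972:ℝ) ≤ Real.log (9/8) := by
  have h := (log_one_sub_bounds (x := 1/9) (by norm_num) (by norm_num) 2).2
  have h9 : Real.log (9/8) = - Real.log (1 - 1/9) := by
    rw [show (1:ℝ) - 1/9 = 8/9 by norm_num, ← Real.log_inv]; norm_num
  rw [h9]
  simp [Finset.sum_range_succ] at h
  nlinarith [h]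

lemma log_98_ub : Real.log (9/8) ≤ (0.1189:ℝ) := by
  have h := (log_one_sub_bounds (x := 1/9) (by norm_num) (by norm_num) 2).1
  have h9 : Real.log (9/8) = - Real.log (1 - 1/9) := by
    rw [show (1:ℝ) - 1/9 = 8/9 by norm_num, ← Real.log_inv]; norm_num
  rw [h9]
  simp [Finset.sum_range_succ] at h
  nlinarith [h]

lemma log_94_lb : (0.777:ℝ) ≤ Real.log (9/4) := by
  have h2 : Real.log (9/4) = Real.log 2 + Real.log (9/8) := by
    rw [← Real.log_mul (by norm_num) (by norm_num)]; norm_num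
  have := Real.log_two_gt_d9
  linarith [log_98_lb]

lemma log_94_ub : Real.log (9/4) ≤ (0.813:ℝ) := by
  have h2 : Real.log (9/4) = Real.log 2 + Real.log (9/8) := by
    rw [← Real.log_mul (by norm_num) (by norm_num)]; norm_num
  have := Real.log_two_lt_d9
  linarith [log_98_ub]

lemma log_95_ub : Real.log (9/5) ≤ (0.5996:ℝ) := by
  have h := (log_one_sub_bounds (x := 4/9) (by norm_num) (by norm_num) 5).1
  have h9 : Real.log (9/5) = - Real.log (1 - 4/9) := by
    rw [show (1:ℝ) - 4/9 = 5/9 by norm_num, ← Real.log_inv]; norm_num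
  rw [h9]
  simp [Finset.sum_range_succ] at h
  nlinarith [h]

lemma log_54_ub : Real.log (5/4) ≤ (0.23:ℝ) := by
  have h := (log_one_sub_bounds (x := 1/5) (by norm_num) (by norm_num) 2).1
  have h9 : Real.log (5/4) = - Real.log (1 - 1/5) := by
    rw [show (1:ℝ) - 1/5 = 4/5 by norm_num, ← Real.log_inv]; norm_num
  rw [h9]
  simp [Finset.sum_range_succ] at h
  nlinarith [h]

/-- the penalty function `G` -/
noncomputable def Gfun : ℝ → ℝ :=
  fun t => (1 + t) * Real.log (1 + t) + Real.negMulLog t - Real.log 2 - 0.777 * t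

lemma Gfun_hasDeriv {t : ℝ} (ht : 0 < t) :
    HasDerivAt Gfun (Real.log (1 + t) - Real.log t - 0.777) t := by
  have h1 : HasDerivAt (fun t : ℝ => 1 + t) 1 t := by
    simpa using (hasDerivAt_id t).const_add 1
  have hlog : HasDerivAt (fun t : ℝ => Real.log (1 + t)) (1 / (1 + t)) t := by
    exact ((Real.hasDerivAt_log (by linarith : (1:ℝ) + t ≠ 0)).comp t h1).congr_deriv (by simp)
  have h2 : HasDerivAt (fun t : ℝ => (1 + t) * Real.log (1 + t))
      (1 * Real.log (1 + t) + (1 + t) * (1 / (1 + t))) t := h1.mul hlog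
  have h3 : HasDerivAt Real.negMulLog (-Real.log t - 1) t :=
    Real.hasDerivAt_negMulLog ht.ne'
  have h4 : HasDerivAt (fun t : ℝ => Real.log 2 + 0.777 * t) 0.777 t := by
    simpa using ((hasDerivAt_id t).const_mul (0.777:ℝ)).const_add (Real.log 2)
  have h5 := (h2.add h3).sub h4
  convert h5 using 1
  · rfl
  · rfl
  · funext x; simp [Gfun]; ring
  · have : (1:ℝ) + t ≠ 0 := by linarith
    field_simp
    ring

lemma Gfun_contOn : ContinuousOn Gfun (Icc (0:ℝ) 1) := by
  have hmaps : ∀ x ∈ Icc (0:ℝ) 1, (1:ℝ) + x ∈ {y : ℝ | y ≠ 0} := by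
    intro x hx
    have := hx.1
    simp only [Set.mem_setOf_eq]
    intro h; linarith
  apply ContinuousOn.sub
  apply ContinuousOn.sub
  apply ContinuousOn.add
  · exact (continuousOn_const.add continuousOn_id).mul
      (Real.continuousOn_log.comp (continuousOn_const.add continuousOn_id) hmaps)
  · exact Real.continuous_negMulLog.continuousOn
  · exact continuousOn_const
  · exact (continuous_const.mul continuous_id).continuousOn

lemma Gfun_at_08 : Gfun (4/5) ≤ -0.008 := by
  have h1 : Real.negMulLog (4/5 : ℝ) = (4/5) * Real.log (5/4) := by
    rw [Real.negMulLog, show (4/5 : ℝ) = ((5:ℝ)/4)⁻¹ by norm_num, Real.log_inv]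
    norm_num
  have h2 : (1 : ℝ) + 4/5 = 9/5 := by norm_num
  rw [Gfun, h1, h2]
  have := log_95_ub
  have := log_54_ub
  have := Real.log_two_gt_d9
  nlinarith

lemma Gfun_mono_le (t : ℝ) (ht : t ∈ Icc (0:ℝ) (4/5)) : Gfun t ≤ Gfun (4/5) := by
  have hmono : MonotoneOn Gfun (Icc (0:ℝ) (4/5)) := by
    apply monotoneOn_of_deriv_nonneg (convex_Icc _ _)
      (Gfun_contOn.mono (Icc_subset_Icc le_rfl (by norm_num)))
    · intro x hx
      rw [interior_Icc] at hx
      exact (Gfun_hasDeriv hx.1).differentiableAt.differentiableWithinAt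
    · intro x hx
      rw [interior_Icc] at hx
      rw [(Gfun_hasDeriv hx.1).deriv]
      have hlog : Real.log (9/4) ≤ Real.log (1 + x) - Real.log x := by
        rw [← Real.log_div (ne_of_gt (by linarith [hx.1] : (0:ℝ) < 1 + x)) (ne_of_gt hx.1)]
        apply Real.log_le_log (by norm_num)
        rw [le_div_iff₀ hx.1]; linarith [hx.2]
      linarith [log_94_lb]
  exact hmono ht (by constructor <;> norm_num) ht.2

lemma Gfun_upper (t : ℝ) (ht : t ∈ Icc (4/5 : ℝ) 1) : Gfun t ≤ Gfun (4/5) + 0.04 * (t - 4/5) := by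
  set H : ℝ → ℝ := fun t => Gfun t - 0.04 * t with hH
  have hanti : AntitoneOn H (Icc (4/5 : ℝ) 1) := by
    apply antitoneOn_of_deriv_nonpos (convex_Icc _ _)
    · exact (Gfun_contOn.mono (Icc_subset_Icc (by norm_num) le_rfl)).sub
        (continuous_const.mul continuous_id).continuousOn
    · intro x hx
      rw [interior_Icc] at hx
      have hx0 : (0:ℝ) < x := by linarith [hx.1]
      exact ((Gfun_hasDeriv hx0).sub
        ((hasDerivAt_id x).const_mul (0.04:ℝ))).differentiableAt.differentiableWithinAt
    · intro x hx
      rw [interior_Icc] at hx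
      have hx0 : (0:ℝ) < x := by linarith [hx.1]
      have hd : HasDerivAt H (Real.log (1 + x) - Real.log x - 0.777 - 0.04 * 1) x :=
        (Gfun_hasDeriv hx0).sub ((hasDerivAt_id x).const_mul (0.04:ℝ))
      rw [hd.deriv]
      have hlog : Real.log (1 + x) - Real.log x ≤ Real.log (9/4) := by
        rw [← Real.log_div (ne_of_gt (by linarith [hx.1] : (0:ℝ) < 1 + x)) (ne_of_gt hx0)]
        apply Real.log_le_log (by positivity)
        rw [div_le_iff₀ hx0]; linarith [hx.1]
      linarith [log_94_ub]
  have := hanti (by constructor <;> norm_num : (4/5:ℝ) ∈ Icc (4/5:ℝ) 1) ht ht.1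
  simp only [hH] at this
  linarith

/-- Claim A: the Alicki–Fannes penalty bound. -/
lemma gnat_le {t : ℝ} (h0 : 0 ≤ t) (h1 : t ≤ 1) :
    (1 + t) * Real.log (1 + t) - t * Real.log t ≤ Real.log 2 + 0.777 * t := by
  have key : Gfun t ≤ 0 := by
    rcases le_or_gt t (4/5) with h | h
    · have := Gfun_mono_le t ⟨h0, h⟩
      linarith [Gfun_at_08]
    · have h2 := Gfun_upper t ⟨h.le, h1⟩
      have h04 : (0.04:ℝ) * (t - 4/5) ≤ 0.04 * (1 - 4/5) := by nlinarith
      linarith [Gfun_at_08]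
  have hnm : Real.negMulLog t = - t * Real.log t := rfl
  simp only [Gfun, hnm] at key
  linarith [key]



/-- The log-sum inequality. -/
lemma logSum {ι : Type*} (s : Finset ι) (f g : ι → ℝ) (hf : ∀ i ∈ s, 0 ≤ f i)
    (hg : ∀ i ∈ s, 0 ≤ g i) (hac : ∀ i ∈ s, g i = 0 → f i = 0) :
    (∑ i ∈ s, f i) * (Real.log (∑ i ∈ s, f i) - Real.log (∑ i ∈ s, g i)) ≤
    ∑ i ∈ s, f i * (Real.log (f i) - Real.log (g i)) := by
  set F := ∑ i ∈ s, f i with hF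
  set G := ∑ i ∈ s, g i with hG
  have hRHS0 : (∀ i ∈ s, f i = 0) → 0 ≤ ∑ i ∈ s, f i * (Real.log (f i) - Real.log (g i)) := by
    intro h
    apply Finset.sum_nonneg; intro i hi; rw [h i hi]; simp
  rcases eq_or_lt_of_le (Finset.sum_nonneg hg) with hG0 | hG0
  · have hallg : ∀ i ∈ s, g i = 0 := (Finset.sum_eq_zero_iff_of_nonneg hg).1 hG0.symm
    have hallf : ∀ i ∈ s, f i = 0 := fun i hi => hac i hi (hallg i hi)
    have : F = 0 := Finset.sum_eq_zero hallf
    rw [this, zero_mul]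
    exact hRHS0 hallf
  rcases eq_or_lt_of_le (Finset.sum_nonneg hf) with hF0 | hF0
  · have hF' : F = 0 := hF.trans hF0.symm
    rw [hF', zero_mul]
    apply hRHS0
    exact fun i hi => (Finset.sum_eq_zero_iff_of_nonneg hf).1 hF0.symm i hi
  -- main case
  have hGne : G ≠ 0 := ne_of_gt hG0
  have hFne : F ≠ 0 := ne_of_gt hF0
  have jensen := Real.convexOn_mul_log.map_sum_le (t := s) (w := fun i => g i / G)
      (p := fun i => f i / g i)
      (fun i hi => div_nonneg (hg i hi) hG0.le)
      (by rw [← Finset.sum_div]; field_simp; exact hG.symm)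
      (fun i hi => Set.mem_Ici.2 (div_nonneg (hf i hi) (hg i hi)))
  have hsum1 : ∑ i ∈ s, (g i / G) • (f i / g i) = F / G := by
    rw [eq_div_iff hGne, Finset.sum_mul]
    apply Finset.sum_congr rfl
    intro i hi
    rcases eq_or_lt_of_le (hg i hi) with h0 | h0
    · rw [hac i hi h0.symm, ← h0]; simp
    · field_simp
      linear_combination (f i) * (g i * (g i)⁻¹ * mul_inv_cancel₀ hGne + mul_inv_cancel₀ h0.ne')
  have hsum2 : ∑ i ∈ s, (g i / G) • ((f i / g i) * Real.log (f i / g i)) =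
      (∑ i ∈ s, f i * (Real.log (f i) - Real.log (g i))) / G := by
    rw [eq_div_iff hGne, Finset.sum_mul]
    apply Finset.sum_congr rfl
    intro i hi
    rcases eq_or_lt_of_le (hg i hi) with h0 | h0
    · rw [hac i hi h0.symm, ← h0]; simp
    · rcases eq_or_lt_of_le (hf i hi) with hf0 | hf0
      · rw [← hf0]; simp
      · rw [Real.log_div (ne_of_gt hf0) (ne_of_gt h0)]
        field_simp
        linear_combination (f i * Real.log (f i) - f i * Real.log (g i)) *
          (g i * (g i)⁻¹ * mul_inv_cancel₀ hGne + mul_inv_cancel₀ h0.ne')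
  rw [hsum1, hsum2] at jensen
  have hdiv : F / G * Real.log (F / G) ≤ (∑ i ∈ s, f i * (Real.log (f i) - Real.log (g i))) / G :=
    by simpa using jensen
  rw [Real.log_div hFne hGne] at hdiv
  calc F * (Real.log F - Real.log G) = (F / G * (Real.log F - Real.log G)) * G := by
        field_simp
    _ ≤ ((∑ i ∈ s, f i * (Real.log (f i) - Real.log (g i))) / G) * G := by
        apply mul_le_mul_of_nonneg_right hdiv hG0.le
    _ = ∑ i ∈ s, f i * (Real.log (f i) - Real.log (g i)) := by field_simp

/-- Gibbs' inequality. -/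
lemma klNonneg {α : Type*} [Fintype α] (p q : α → ℝ) (hp0 : ∀ a, 0 ≤ p a)
    (hp1 : ∑ a, p a = 1) (hq0 : ∀ a, 0 ≤ q a) (hq1 : ∑ a, q a = 1)
    (hac : ∀ a, q a = 0 → p a = 0) :
    0 ≤ ∑ a, p a * (Real.log (p a) - Real.log (q a)) := by
  have := logSum Finset.univ p q (fun i _ => hp0 i) (fun i _ => hq0 i) (fun i _ => hac i)
  rw [hp1, hq1] at this
  simpa using this

lemma neg_log_ge {t : ℝ} (ht0 : 0 < t) (ht1 : t ≤ 1) : 2 * (1 - t)^2 ≤ -Real.log t := by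
  set ψ : ℝ → ℝ := fun x => -Real.log x - 2 * (1 - x)^2 with hψ
  have hderiv : ∀ x : ℝ, 0 < x → HasDerivAt ψ (-(x⁻¹) + 4 * (1 - x)) x := by
    intro x hx
    have h1 : HasDerivAt (fun x : ℝ => -Real.log x) (-(x⁻¹)) x :=
      (Real.hasDerivAt_log (ne_of_gt hx)).neg
    have h2 : HasDerivAt (fun x : ℝ => 2 * (1 - x)^2)
        (2 * ((2 : ℕ) * (1 - x)^1 * (-1))) x := by
      exact (((hasDerivAt_id x).const_sub 1).pow 2).const_mul 2
    have := h1.sub h2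
    refine this.congr_deriv ?_
    push_cast
    ring
  have hanti : AntitoneOn ψ (Icc t 1) := by
    apply antitoneOn_of_deriv_nonpos (convex_Icc _ _)
    · apply ContinuousOn.sub
      · apply ContinuousOn.neg
        apply Real.continuousOn_log.mono
        intro x hx; exact ne_of_gt (lt_of_lt_of_le ht0 hx.1)
      · exact (continuous_const.mul ((continuous_const.sub continuous_id).pow 2)).continuousOn
    · intro x hx
      rw [interior_Icc] at hx
      exact (hderiv x (lt_trans ht0 hx.1)).differentiableAt.differentiableWithinAt
    · intro x hx
      rw [interior_Icc] at hx
      have hx0 : 0 < x := lt_trans ht0 hx.1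
      rw [(hderiv x hx0).deriv]
      have h4 : 4 * x * (1 - x) ≤ 1 := by nlinarith [sq_nonneg (2*x - 1)]
      have hxe : x ≠ 0 := ne_of_gt hx0
      have heq : -(x⁻¹) + 4 * (1-x) = (4 * x * (1 - x) - 1) / x := by field_simp; ring
      rw [heq]
      exact div_nonpos_of_nonpos_of_nonneg (by linarith) hx0.le
  have h1mem : (1:ℝ) ∈ Icc t 1 := ⟨ht1, le_rfl⟩
  have htmem : t ∈ Icc t 1 := ⟨le_rfl, ht1⟩
  have := hanti htmem h1mem ht1
  simp only [hψ, Real.log_one] at this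
  linarith

lemma pinsker_scalar {a b : ℝ} (ha : 0 ≤ a) (ha1 : a ≤ 1) (hb : 0 ≤ b) (hb1 : b ≤ 1)
    (h0 : b = 0 → a = 0) (h1 : b = 1 → a = 1) :
    2 * (a - b)^2 ≤ a * (Real.log a - Real.log b) + (1 - a) * (Real.log (1 - a) - Real.log (1 - b)) := by
  rcases eq_or_ne a b with rfl | hne
  · simp
  have hb0 : 0 < b := by
    rcases eq_or_lt_of_le hb with h | h
    · exact absurd (h0 h.symm) (by rw [← h] at hne; exact hne)
    · exact h
  have hb1' : b < 1 := by
    rcases eq_or_lt_of_le hb1 with h | h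
    · exact absurd (h1 h) (by rw [h] at hne; exact hne)
    · exact h
  rcases eq_or_lt_of_le ha with ha0 | ha0
  · -- a = 0
    rw [← ha0]
    have hball := neg_log_ge (t := 1 - b) (by linarith) (by linarith)
    have hsimp : (0:ℝ) * (Real.log 0 - Real.log b)
        + (1 - 0) * (Real.log (1-0) - Real.log (1-b)) = -Real.log (1-b) := by simp
    rw [hsimp]
    nlinarith [hball]
  rcases eq_or_lt_of_le ha1 with ha1' | ha1'
  · -- a = 1
    rw [ha1']
    have hball := neg_log_ge (t := b) hb0 hb1
    have hsimp : (1:ℝ) * (Real.log 1 - Real.log b)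
        + (1 - 1) * (Real.log (1-1) - Real.log (1-b)) = -Real.log b := by simp
    rw [hsimp]
    nlinarith [hball]
  -- 0 < a < 1, 0 < b < 1
  set φ : ℝ → ℝ := fun x =>
    a * (Real.log a - Real.log x) + (1 - a) * (Real.log (1 - a) - Real.log (1 - x))
      - 2 * (a - x)^2 with hφ
  have hderiv : ∀ x : ℝ, 0 < x → x < 1 →
      HasDerivAt φ (-(a * x⁻¹) + (1 - a) * (1 - x)⁻¹ + 4 * (a - x)) x := by
    intro x hx0 hx1
    have hlog : HasDerivAt (fun x : ℝ => Real.log x) x⁻¹ x := Real.hasDerivAt_log (ne_of_gt hx0)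
    have hlog2 : HasDerivAt (fun x : ℝ => Real.log (1 - x)) ((1-x)⁻¹ * (-1)) x := by
      exact (Real.hasDerivAt_log (by linarith : (1:ℝ) - x ≠ 0)).comp x ((hasDerivAt_id x).const_sub 1)
    have h1 : HasDerivAt (fun x : ℝ => a * (Real.log a - Real.log x)) (a * (0 - x⁻¹)) x :=
      ((hasDerivAt_const x (Real.log a)).sub hlog).const_mul a
    have h2 : HasDerivAt (fun x : ℝ => (1 - a) * (Real.log (1-a) - Real.log (1 - x)))
        ((1 - a) * (0 - ((1-x)⁻¹ * (-1)))) x :=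
      ((hasDerivAt_const x (Real.log (1-a))).sub hlog2).const_mul (1-a)
    have h3 : HasDerivAt (fun x : ℝ => 2 * (a - x)^2) (2 * ((2:ℕ) * (a - x)^1 * (-1))) x :=
      (((hasDerivAt_id x).const_sub a).pow 2).const_mul 2
    have := (h1.add h2).sub h3
    refine this.congr_deriv ?_
    push_cast
    ring
  have key : 0 ≤ φ b := by
    have hφa : φ a = 0 := by simp [hφ]
    rcases lt_or_gt_of_ne hne with hab | hab
    · -- a < b : φ monotone on [a, b]
      have hmono : MonotoneOn φ (Icc a b) := by
        apply monotoneOn_of_deriv_nonneg (convex_Icc _ _)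
        · apply ContinuousOn.sub
          apply ContinuousOn.add
          · apply ContinuousOn.mul continuousOn_const
            apply ContinuousOn.sub continuousOn_const
            apply Real.continuousOn_log.mono
            intro x hx; exact ne_of_gt (lt_of_lt_of_le ha0 hx.1)
          · apply ContinuousOn.mul continuousOn_const
            apply ContinuousOn.sub continuousOn_const
            apply ContinuousOn.comp Real.continuousOn_log
              (continuous_const.sub continuous_id).continuousOn
            intro x hx
            exact ne_of_gt (by simp at hx ⊢; linarith [hx.2] : (0:ℝ) < 1 - x)
          · exact (continuous_const.mul ((continuous_const.sub continuous_id).pow 2)).continuousOn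
        · intro x hx
          rw [interior_Icc] at hx
          exact (hderiv x (lt_trans ha0 hx.1) (by linarith [hx.2, hb1'])).differentiableAt.differentiableWithinAt
        · intro x hx
          rw [interior_Icc] at hx
          have hx0 : 0 < x := lt_trans ha0 hx.1
          have hx1 : x < 1 := by linarith [hx.2]
          rw [(hderiv x hx0 hx1).deriv]
          have hxa : a ≤ x := hx.1.le
          have hxe : x ≠ 0 := ne_of_gt hx0
          have hxe1 : (1:ℝ) - x ≠ 0 := ne_of_gt (by linarith)
          have expand : -(a * x⁻¹) + (1 - a) * (1 - x)⁻¹ + 4 * (a - x)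
              = (x - a) * (1 - 4 * x * (1 - x)) / (x * (1 - x)) := by
            field_simp
            ring
          rw [expand]
          apply div_nonneg _ (by nlinarith)
          have : 4 * x * (1 - x) ≤ 1 := by nlinarith [sq_nonneg (2*x - 1)]
          nlinarith
      have := hmono (⟨le_rfl, hab.le⟩ : a ∈ Icc a b) ⟨hab.le, le_rfl⟩ hab.le
      rw [hφa] at this
      exact this
    · -- b < a : φ antitone on [b, a]
      have hanti : AntitoneOn φ (Icc b a) := by
        apply antitoneOn_of_deriv_nonpos (convex_Icc _ _)
        · apply ContinuousOn.sub
          apply ContinuousOn.add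
          · apply ContinuousOn.mul continuousOn_const
            apply ContinuousOn.sub continuousOn_const
            apply Real.continuousOn_log.mono
            intro x hx; exact ne_of_gt (lt_of_lt_of_le hb0 hx.1)
          · apply ContinuousOn.mul continuousOn_const
            apply ContinuousOn.sub continuousOn_const
            apply ContinuousOn.comp Real.continuousOn_log
              (continuous_const.sub continuous_id).continuousOn
            intro x hx
            exact ne_of_gt (by simp at hx ⊢; linarith [hx.2, ha1'] : (0:ℝ) < 1 - x)
          · exact (continuous_const.mul ((continuous_const.sub continuous_id).pow 2)).continuousOn
        · intro x hx
          rw [interior_Icc] at hx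
          exact (hderiv x (lt_trans hb0 hx.1) (lt_trans hx.2 ha1')).differentiableAt.differentiableWithinAt
        · intro x hx
          rw [interior_Icc] at hx
          have hx0 : 0 < x := lt_trans hb0 hx.1
          have hx1 : x < 1 := lt_trans hx.2 ha1'
          rw [(hderiv x hx0 hx1).deriv]
          have hxe : x ≠ 0 := ne_of_gt hx0
          have hxe1 : (1:ℝ) - x ≠ 0 := ne_of_gt (by linarith)
          have expand : -(a * x⁻¹) + (1 - a) * (1 - x)⁻¹ + 4 * (a - x)
              = (x - a) * (1 - 4 * x * (1 - x)) / (x * (1 - x)) := by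
            field_simp
            ring
          rw [expand]
          apply div_nonpos_of_nonpos_of_nonneg _ (by nlinarith)
          have : 4 * x * (1 - x) ≤ 1 := by nlinarith [sq_nonneg (2*x - 1)]
          nlinarith [hx.2]
      have := hanti (⟨le_rfl, hab.le⟩ : b ∈ Icc b a) ⟨hab.le, le_rfl⟩ hab.le
      rw [hφa] at this
      exact this
  simp only [hφ] at key
  linarith

/-- Pinsker's inequality, L¹ form. -/
lemma pinsker {α : Type*} [Fintype α] (p q : α → ℝ) (hp0 : ∀ a, 0 ≤ p a)
    (hp1 : ∑ a, p a = 1) (hq0 : ∀ a, 0 ≤ q a) (hq1 : ∑ a, q a = 1)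
    (hac : ∀ a, q a = 0 → p a = 0) :
    ∑ a, |p a - q a| ≤ Real.sqrt (2 * ∑ a, p a * (Real.log (p a) - Real.log (q a))) := by
  classical
  set S := Finset.univ.filter (fun a => q a < p a) with hS
  set A := ∑ i ∈ S, p i with hA
  set B := ∑ i ∈ S, q i with hB
  have hsplit : ∀ f : α → ℝ, ∑ a, f a = ∑ i ∈ S, f i + ∑ i ∈ Finset.univ.filter (fun a => ¬ q a < p a), f i := by
    intro f
    rw [hS, Finset.sum_filter_add_sum_filter_not]
  have hpc : ∑ i ∈ Finset.univ.filter (fun a => ¬ q a < p a), p i = 1 - A := by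
    have := hsplit p; rw [hp1] at this; linarith
  have hqc : ∑ i ∈ Finset.univ.filter (fun a => ¬ q a < p a), q i = 1 - B := by
    have := hsplit q; rw [hq1] at this; linarith
  have hDel : ∑ a, |p a - q a| = 2 * (A - B) := by
    rw [hsplit (fun a => |p a - q a|)]
    have e1 : ∑ i ∈ S, |p i - q i| = A - B := by
      rw [hA, hB, ← Finset.sum_sub_distrib]
      apply Finset.sum_congr rfl
      intro i hi
      rw [hS, Finset.mem_filter] at hi
      rw [abs_of_pos (by linarith [hi.2])]
    have e2 : ∑ i ∈ Finset.univ.filter (fun a => ¬ q a < p a), |p i - q i|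
        = (1 - B) - (1 - A) := by
      rw [← hqc, ← hpc, ← Finset.sum_sub_distrib]
      apply Finset.sum_congr rfl
      intro i hi
      rw [Finset.mem_filter] at hi
      have : p i ≤ q i := not_lt.1 hi.2
      rw [abs_of_nonpos (by linarith)]
      ring
    rw [e1, e2]; ring
  have hA01 : 0 ≤ A ∧ A ≤ 1 := by
    constructor
    · exact Finset.sum_nonneg (fun i _ => hp0 i)
    · rw [← hp1]
      exact Finset.sum_le_sum_of_subset_of_nonneg (Finset.subset_univ S) (fun i _ _ => hp0 i)
  have hB01 : 0 ≤ B ∧ B ≤ 1 := by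
    constructor
    · exact Finset.sum_nonneg (fun i _ => hq0 i)
    · rw [← hq1]
      exact Finset.sum_le_sum_of_subset_of_nonneg (Finset.subset_univ S) (fun i _ _ => hq0 i)
  have hB0 : B = 0 → A = 0 := by
    intro h
    have hq' : ∀ i ∈ S, q i = 0 := (Finset.sum_eq_zero_iff_of_nonneg (fun i _ => hq0 i)).1 h
    exact Finset.sum_eq_zero (fun i hi => hac i (hq' i hi))
  have hB1 : B = 1 → A = 1 := by
    intro h
    have h0 : ∑ i ∈ Finset.univ.filter (fun a => ¬ q a < p a), q i = 0 := by rw [hqc, h]; ring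
    have hq' : ∀ i ∈ Finset.univ.filter (fun a => ¬ q a < p a), q i = 0 :=
      (Finset.sum_eq_zero_iff_of_nonneg (fun i _ => hq0 i)).1 h0
    have hp' : ∑ i ∈ Finset.univ.filter (fun a => ¬ q a < p a), p i = 0 :=
      Finset.sum_eq_zero (fun i hi => hac i (hq' i hi))
    rw [hpc] at hp'; linarith
  have hKL1 : A * (Real.log A - Real.log B) ≤ ∑ i ∈ S, p i * (Real.log (p i) - Real.log (q i)) :=
    logSum S p q (fun i _ => hp0 i) (fun i _ => hq0 i) (fun i hi h => hac i h)
  have hKL2 : (1 - A) * (Real.log (1 - A) - Real.log (1 - B)) ≤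
      ∑ i ∈ Finset.univ.filter (fun a => ¬ q a < p a), p i * (Real.log (p i) - Real.log (q i)) := by
    have := logSum (Finset.univ.filter (fun a => ¬ q a < p a)) p q
      (fun i _ => hp0 i) (fun i _ => hq0 i) (fun i hi h => hac i h)
    rwa [hpc, hqc] at this
  have hscalar := pinsker_scalar hA01.1 hA01.2 hB01.1 hB01.2 hB0 hB1
  have hKL : 2 * (A - B)^2 ≤ ∑ a, p a * (Real.log (p a) - Real.log (q a)) := by
    rw [hsplit (fun a => p a * (Real.log (p a) - Real.log (q a)))]
    linarith
  have hAB : 0 ≤ A - B := by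
    rw [hA, hB, ← Finset.sum_sub_distrib]
    apply Finset.sum_nonneg
    intro i hi
    rw [hS, Finset.mem_filter] at hi
    linarith [hi.2]
  rw [hDel]
  rw [Real.le_sqrt (by linarith) (by nlinarith)]
  nlinarith



section Entropy

variable {A B ι : Type*} [Fintype A] [Fintype B] [Fintype ι]

noncomputable def Hn {α : Type*} [Fintype α] (q : α → ℝ) : ℝ := ∑ a, Real.negMulLog (q a)

noncomputable def margB {A B : Type*} [Fintype A] (ν : A × B → ℝ) : B → ℝ := fun b => ∑ a, ν (a, b)

noncomputable def Fn {A B : Type*} [Fintype A] [Fintype B] (ν : A × B → ℝ) : ℝ :=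
  Hn ν - Hn (margB ν)

lemma negMulLog_add_le {x y : ℝ} (hx : 0 ≤ x) (hy : 0 ≤ y) :
    Real.negMulLog (x + y) ≤ Real.negMulLog x + Real.negMulLog y := by
  rcases eq_or_lt_of_le hx with h | h
  · rw [← h]; simp
  rcases eq_or_lt_of_le hy with h' | h'
  · rw [← h']; simp
  have hxy : 0 < x + y := by linarith
  simp only [Real.negMulLog, neg_mul]
  have e : -((x + y) * Real.log (x+y)) = -(x * Real.log (x+y)) + -(y * Real.log (x+y)) := by ring
  rw [e]
  have h1 : -(x * Real.log (x+y)) ≤ -(x * Real.log x) := by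
    apply neg_le_neg
    apply mul_le_mul_of_nonneg_left (Real.log_le_log h (by linarith)) hx
  have h2 : -(y * Real.log (x+y)) ≤ -(y * Real.log y) := by
    apply neg_le_neg
    apply mul_le_mul_of_nonneg_left (Real.log_le_log h' (by linarith)) hy
  linarith

lemma negMulLog_sum_le {κ : Type*} (s : Finset κ) (f : κ → ℝ) (hf : ∀ i ∈ s, 0 ≤ f i) :
    Real.negMulLog (∑ i ∈ s, f i) ≤ ∑ i ∈ s, Real.negMulLog (f i) := by
  induction s using Finset.cons_induction with
  | empty => simp
  | cons a s ha ih =>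
    rw [Finset.sum_cons, Finset.sum_cons]
    have h1 := negMulLog_add_le (hf a (Finset.mem_cons_self a s))
      (Finset.sum_nonneg (fun i hi => hf i (Finset.mem_cons.2 (Or.inr hi))))
    have h2 := ih (fun i hi => hf i (Finset.mem_cons.2 (Or.inr hi)))
    linarith

lemma Hn_nonneg (q : ι → ℝ) (h0 : ∀ a, 0 ≤ q a) (h1 : ∑ a, q a = 1) : 0 ≤ Hn q := by
  apply Finset.sum_nonneg
  intro a _
  apply Real.negMulLog_nonneg (h0 a)
  rw [← h1]
  exact Finset.single_le_sum (fun i _ => h0 i) (Finset.mem_univ a)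

lemma Hn_le_card (q : ι → ℝ) (h0 : ∀ a, 0 ≤ q a) (h1 : ∑ a, q a = 1) :
    Hn q ≤ Real.log (Fintype.card ι) := by
  have hne : Nonempty ι := by
    by_contra h
    rw [not_nonempty_iff] at h
    rw [Finset.univ_eq_empty, Finset.sum_empty] at h1
    norm_num at h1
  have hcard : (0:ℝ) < (Fintype.card ι : ℝ) := by
    have := Fintype.card_pos (α := ι)
    positivity
  set n : ℝ := (Fintype.card ι : ℝ) with hn
  have jensen := Real.concaveOn_negMulLog.le_map_sum (t := Finset.univ)
    (w := fun _ : ι => 1 / n) (p := q)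
    (fun i _ => by positivity)
    (by rw [Finset.sum_const, nsmul_eq_mul, Finset.card_univ, ← hn]; exact mul_one_div_cancel hcard.ne')
    (fun i _ => Set.mem_Ici.2 (h0 i))
  have hL : ∑ i : ι, (1 / n) • Real.negMulLog (q i) = (1/n) * Hn q := by
    rw [Hn, Finset.mul_sum]; rfl
  have hR : (∑ i : ι, (1/n) • q i) = 1/n := by
    simp only [smul_eq_mul, ← Finset.mul_sum, h1, mul_one]
  rw [hL, hR] at jensen
  have hval : Real.negMulLog (1/n) = (1/n) * Real.log n := by
    rw [Real.negMulLog, one_div, Real.log_inv]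
    ring
  rw [hval] at jensen
  have := mul_le_mul_of_nonneg_left jensen (le_of_lt hcard)
  calc Hn q = n * ((1/n) * Hn q) := by field_simp
    _ ≤ n * ((1/n) * Real.log n) := by
        apply mul_le_mul_of_nonneg_left jensen hcard.le
    _ = Real.log n := by field_simp

lemma sum_negMulLog_le (x : A → ℝ) (h0 : ∀ a, 0 ≤ x a) :
    ∑ a, Real.negMulLog (x a) ≤ Real.negMulLog (∑ a, x a)
      + (∑ a, x a) * Real.log (Fintype.card A) := by
  set m := ∑ a, x a with hm
  rcases eq_or_lt_of_le (Finset.sum_nonneg (fun a _ => h0 a) : 0 ≤ m) with h | h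
  · have hz : ∀ a ∈ Finset.univ, x a = 0 := (Finset.sum_eq_zero_iff_of_nonneg (fun a _ => h0 a)).1 h.symm
    have hzz : ∑ a, Real.negMulLog (x a) = 0 := Finset.sum_eq_zero (fun a ha => by rw [hz a ha]; simp)
    have hm0 : m = 0 := h.symm
    rw [hzz, hm0]; simp
  · have hmne : m ≠ 0 := ne_of_gt h
    set q := fun a => x a / m with hq
    have hq0 : ∀ a, 0 ≤ q a := fun a => div_nonneg (h0 a) h.le
    have hq1 : ∑ a, q a = 1 := by rw [hq, ← Finset.sum_div, ← hm]; field_simp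
    have hterm : ∀ a, Real.negMulLog (x a) = q a * Real.negMulLog m + m * Real.negMulLog (q a) := by
      intro a
      have : x a = m * q a := by rw [hq]; field_simp
      rw [this, Real.negMulLog_mul]
    calc ∑ a, Real.negMulLog (x a)
        = ∑ a, (q a * Real.negMulLog m + m * Real.negMulLog (q a)) := by
          exact Finset.sum_congr rfl (fun a _ => hterm a)
      _ = (∑ a, q a) * Real.negMulLog m + m * Hn q := by
          rw [Finset.sum_add_distrib, ← Finset.sum_mul, ← Finset.mul_sum, Hn]
      _ = Real.negMulLog m + m * Hn q := by rw [hq1, one_mul]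
      _ ≤ Real.negMulLog m + m * Real.log (Fintype.card A) := by
          have := Hn_le_card q hq0 hq1
          nlinarith
      _ = Real.negMulLog m + m * Real.log (Fintype.card A) := rfl

lemma Hn_prod (ν : A × B → ℝ) : Hn ν = ∑ b, ∑ a, Real.negMulLog (ν (a, b)) := by
  rw [Hn, Fintype.sum_prod_type_right]

lemma margB_nonneg (ν : A × B → ℝ) (h0 : ∀ i, 0 ≤ ν i) : ∀ b, 0 ≤ margB ν b :=
  fun b => Finset.sum_nonneg (fun a _ => h0 (a, b))

lemma margB_sum (ν : A × B → ℝ) : ∑ b, margB ν b = ∑ i, ν i := by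
  rw [Fintype.sum_prod_type_right]; rfl

lemma le_margB (ν : A × B → ℝ) (h0 : ∀ i, 0 ≤ ν i) (a : A) (b : B) : ν (a, b) ≤ margB ν b :=
  Finset.single_le_sum (fun i _ => h0 (i, b)) (Finset.mem_univ a)

lemma Fn_nonneg (ν : A × B → ℝ) (h0 : ∀ i, 0 ≤ ν i) : 0 ≤ Fn ν := by
  rw [Fn, sub_nonneg, Hn_prod ν, Hn]
  apply Finset.sum_le_sum
  intro b _
  exact negMulLog_sum_le Finset.univ (fun a => ν (a, b)) (fun a _ => h0 (a, b))

lemma Fn_le_card (ν : A × B → ℝ) (h0 : ∀ i, 0 ≤ ν i) (h1 : ∑ i, ν i = 1) :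
    Fn ν ≤ Real.log (Fintype.card A) := by
  rw [Fn, sub_le_iff_le_add, Hn_prod ν]
  have hb : ∀ b, ∑ a, Real.negMulLog (ν (a, b)) ≤
      Real.negMulLog (margB ν b) + margB ν b * Real.log (Fintype.card A) := by
    intro b
    exact sum_negMulLog_le (fun a => ν (a, b)) (fun a => h0 (a, b))
  calc ∑ b, ∑ a, Real.negMulLog (ν (a, b))
      ≤ ∑ b, (Real.negMulLog (margB ν b) + margB ν b * Real.log (Fintype.card A)) :=
        Finset.sum_le_sum (fun b _ => hb b)
    _ = Hn (margB ν) + (∑ b, margB ν b) * Real.log (Fintype.card A) := by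
        rw [Finset.sum_add_distrib, ← Finset.sum_mul, Hn]
    _ = Real.log (Fintype.card A) + Hn (margB ν) := by
        rw [margB_sum, h1, one_mul]; ring

lemma Fn_eq (ν : A × B → ℝ) :
    Fn ν = -∑ i, ν i * (Real.log (ν i) - Real.log (margB ν i.2)) := by
  have h1 : ∑ i, ν i * Real.log (ν i) = -Hn ν := by
    rw [Hn, ← Finset.sum_neg_distrib]
    apply Finset.sum_congr rfl
    intro i _
    rw [Real.negMulLog]; ring
  have h2 : ∑ i : A × B, ν i * Real.log (margB ν i.2) = -Hn (margB ν) := by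
    rw [Fintype.sum_prod_type_right, Hn, ← Finset.sum_neg_distrib]
    apply Finset.sum_congr rfl
    intro b _
    show ∑ a : A, ν (a, b) * Real.log (margB ν b) = -Real.negMulLog (margB ν b)
    rw [← Finset.sum_mul, Real.negMulLog]
    simp only [margB]
    ring
  have : ∑ i, ν i * (Real.log (ν i) - Real.log (margB ν i.2))
      = (∑ i, ν i * Real.log (ν i)) - ∑ i : A × B, ν i * Real.log (margB ν i.2) := by
    rw [← Finset.sum_sub_distrib]
    apply Finset.sum_congr rfl
    intro i _; ring
  rw [this, h1, h2, Fn]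
  ring

lemma margB_lin (P Q : A × B → ℝ) (x y : ℝ) (b : B) :
    margB (fun i => x * P i + y * Q i) b = x * margB P b + y * margB Q b := by
  simp only [margB, Finset.sum_add_distrib, Finset.mul_sum]

lemma logSum2 {x1 y1 x2 y2 : ℝ} (hx1 : 0 ≤ x1) (hy1 : 0 ≤ y1) (hx2 : 0 ≤ x2) (hy2 : 0 ≤ y2)
    (hac1 : y1 = 0 → x1 = 0) (hac2 : y2 = 0 → x2 = 0) :
    (x1 + x2) * (Real.log (x1 + x2) - Real.log (y1 + y2)) ≤
      x1 * (Real.log x1 - Real.log y1) + x2 * (Real.log x2 - Real.log y2) := by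
  have := logSum (Finset.univ : Finset Bool) (fun b => if b then x1 else x2)
    (fun b => if b then y1 else y2)
    (fun b _ => by cases b <;> simpa)
    (fun b _ => by cases b <;> simpa)
    (fun b _ => by cases b <;> simpa)
  simpa [Fintype.sum_bool] using this

end Entropy

section AF

set_option linter.unusedSectionVars false

variable {A B : Type*} [Fintype A] [Fintype B]

lemma scale_term {x p mp : ℝ} (hx : 0 ≤ x) (hp : 0 ≤ p) (hpm : p ≤ mp) :
    (x * p) * (Real.log (x * p) - Real.log (x * mp)) = x * (p * (Real.log p - Real.log mp)) := by
  rcases eq_or_lt_of_le hx with h | hx0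
  · rw [← h]; simp
  rcases eq_or_lt_of_le hp with h | hp0
  · rw [← h]; simp
  have hmp0 : 0 < mp := lt_of_lt_of_le hp0 hpm
  rw [Real.log_mul (ne_of_gt hx0) (ne_of_gt hp0), Real.log_mul (ne_of_gt hx0) (ne_of_gt hmp0)]
  ring

lemma Fn_concave2 (P Q : A × B → ℝ) (hP0 : ∀ i, 0 ≤ P i) (hQ0 : ∀ i, 0 ≤ Q i)
    {x y : ℝ} (hx : 0 ≤ x) (hy : 0 ≤ y) :
    x * Fn P + y * Fn Q ≤ Fn (fun i => x * P i + y * Q i) := by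
  rw [Fn_eq P, Fn_eq Q, Fn_eq (fun i => x * P i + y * Q i)]
  have key : ∀ i : A × B,
      (x * P i + y * Q i) * (Real.log (x * P i + y * Q i)
        - Real.log (margB (fun i => x * P i + y * Q i) i.2))
      ≤ x * (P i * (Real.log (P i) - Real.log (margB P i.2)))
        + y * (Q i * (Real.log (Q i) - Real.log (margB Q i.2))) := by
    intro i
    have hmx : margB (fun i => x * P i + y * Q i) i.2 = x * margB P i.2 + y * margB Q i.2 :=
      margB_lin P Q x y i.2
    rw [hmx]
    have hac1 : x * margB P i.2 = 0 → x * P i = 0 := by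
      intro h
      rcases mul_eq_zero.1 h with h' | h'
      · rw [h', zero_mul]
      · have h1 : P i ≤ 0 := by
          have := le_margB P hP0 i.1 i.2
          rw [show ((i.1, i.2) : A × B) = i from rfl] at this
          linarith [this, h']
        have : P i = 0 := le_antisymm h1 (hP0 i)
        rw [this, mul_zero]
    have hac2 : y * margB Q i.2 = 0 → y * Q i = 0 := by
      intro h
      rcases mul_eq_zero.1 h with h' | h'
      · rw [h', zero_mul]
      · have h1 : Q i ≤ 0 := by
          have := le_margB Q hQ0 i.1 i.2
          rw [show ((i.1, i.2) : A × B) = i from rfl] at this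
          linarith [this, h']
        have : Q i = 0 := le_antisymm h1 (hQ0 i)
        rw [this, mul_zero]
    have hls := logSum2 (mul_nonneg hx (hP0 i)) (mul_nonneg hx (margB_nonneg P hP0 i.2))
      (mul_nonneg hy (hQ0 i)) (mul_nonneg hy (margB_nonneg Q hQ0 i.2)) hac1 hac2
    have e1 : (x * P i) * (Real.log (x * P i) - Real.log (x * margB P i.2))
        = x * (P i * (Real.log (P i) - Real.log (margB P i.2))) := by
      apply scale_term hx (hP0 i)
      have := le_margB P hP0 i.1 i.2
      rwa [show ((i.1, i.2) : A × B) = i from rfl] at this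
    have e2 : (y * Q i) * (Real.log (y * Q i) - Real.log (y * margB Q i.2))
        = y * (Q i * (Real.log (Q i) - Real.log (margB Q i.2))) := by
      apply scale_term hy (hQ0 i)
      have := le_margB Q hQ0 i.1 i.2
      rwa [show ((i.1, i.2) : A × B) = i from rfl] at this
    rw [e1, e2] at hls
    exact hls
  have hsum : ∑ i : A × B, (x * P i + y * Q i) * (Real.log (x * P i + y * Q i)
        - Real.log (margB (fun i => x * P i + y * Q i) i.2))
      ≤ ∑ i : A × B, (x * (P i * (Real.log (P i) - Real.log (margB P i.2)))
        + y * (Q i * (Real.log (Q i) - Real.log (margB Q i.2)))) :=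
    Finset.sum_le_sum (fun i _ => key i)
  rw [Finset.sum_add_distrib, ← Finset.mul_sum, ← Finset.mul_sum] at hsum
  linarith

lemma Hn_mix_le {ι : Type*} [Fintype ι] (P Q : ι → ℝ) (hP0 : ∀ i, 0 ≤ P i) (hQ0 : ∀ i, 0 ≤ Q i)
    (hP1 : ∑ i, P i = 1) (hQ1 : ∑ i, Q i = 1) {x y : ℝ} (hx : 0 ≤ x) (hy : 0 ≤ y) :
    Hn (fun i => x * P i + y * Q i)
      ≤ x * Hn P + y * Hn Q + Real.negMulLog x + Real.negMulLog y := by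
  have key : ∀ i, Real.negMulLog (x * P i + y * Q i) ≤
      (P i * Real.negMulLog x + x * Real.negMulLog (P i))
      + (Q i * Real.negMulLog y + y * Real.negMulLog (Q i)) := by
    intro i
    have h := negMulLog_add_le (mul_nonneg hx (hP0 i)) (mul_nonneg hy (hQ0 i))
    rw [Real.negMulLog_mul, Real.negMulLog_mul] at h
    linarith
  calc Hn (fun i => x * P i + y * Q i) ≤
      ∑ i, ((P i * Real.negMulLog x + x * Real.negMulLog (P i))
        + (Q i * Real.negMulLog y + y * Real.negMulLog (Q i))) :=
        Finset.sum_le_sum (fun i _ => key i)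
    _ = (∑ i, P i) * Real.negMulLog x + x * Hn P
        + ((∑ i, Q i) * Real.negMulLog y + y * Hn Q) := by
        rw [Hn, Hn]
        rw [Finset.sum_add_distrib, Finset.sum_add_distrib, Finset.sum_add_distrib,
          ← Finset.sum_mul, ← Finset.mul_sum, ← Finset.sum_mul, ← Finset.mul_sum]
    _ = x * Hn P + y * Hn Q + Real.negMulLog x + Real.negMulLog y := by
        rw [hP1, hQ1]; ring

lemma Hn_mix_ge {ι : Type*} [Fintype ι] (P Q : ι → ℝ) (hP0 : ∀ i, 0 ≤ P i) (hQ0 : ∀ i, 0 ≤ Q i)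
    {x y : ℝ} (hx : 0 ≤ x) (hy : 0 ≤ y) (hxy : x + y = 1) :
    x * Hn P + y * Hn Q ≤ Hn (fun i => x * P i + y * Q i) := by
  have key : ∀ i, x * Real.negMulLog (P i) + y * Real.negMulLog (Q i)
      ≤ Real.negMulLog (x * P i + y * Q i) := by
    intro i
    have := Real.concaveOn_negMulLog.2 (Set.mem_Ici.2 (hP0 i)) (Set.mem_Ici.2 (hQ0 i)) hx hy hxy
    simpa using this
  calc x * Hn P + y * Hn Q
      = ∑ i, (x * Real.negMulLog (P i) + y * Real.negMulLog (Q i)) := by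
        rw [Hn, Hn, Finset.sum_add_distrib, ← Finset.mul_sum, ← Finset.mul_sum]
    _ ≤ ∑ i, Real.negMulLog (x * P i + y * Q i) := Finset.sum_le_sum (fun i _ => key i)
    _ = Hn (fun i => x * P i + y * Q i) := rfl

lemma AF1 (P Q : A × B → ℝ) (hP0 : ∀ i, 0 ≤ P i) (hP1 : ∑ i, P i = 1)
    (hQ0 : ∀ i, 0 ≤ Q i) (hQ1 : ∑ i, Q i = 1)
    {lam : ℝ} (hlamdef : lam = (∑ i, |P i - Q i|) / 2) (hlam : 0 < lam) :
    Fn P - Fn Q ≤ lam * Real.log (Fintype.card A)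
      + ((1 + lam) * Real.log (1 + lam) - lam * Real.log lam) := by
  have hlamne : lam ≠ 0 := ne_of_gt hlam
  have h1lam : (0:ℝ) < 1 + lam := by linarith
  have h1lamne : (1:ℝ) + lam ≠ 0 := ne_of_gt h1lam
  set L := Real.log (Fintype.card A) with hL
  have he0 : ∀ i : A × B, 0 ≤ max (P i - Q i) 0 := fun i => le_max_right _ _
  have hf0 : ∀ i : A × B, 0 ≤ max (Q i - P i) 0 := fun i => le_max_right _ _
  have hef_abs : ∀ i : A × B, max (P i - Q i) 0 + max (Q i - P i) 0 = |P i - Q i| := by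
    intro i
    rcases le_total (P i) (Q i) with h | h
    · rw [max_eq_right (by linarith), max_eq_left (by linarith), abs_of_nonpos (by linarith)]
      ring
    · rw [max_eq_left (by linarith), max_eq_right (by linarith), abs_of_nonneg (by linarith)]
      ring
  have hef_sub : ∀ i : A × B, max (P i - Q i) 0 - max (Q i - P i) 0 = P i - Q i := by
    intro i
    rcases le_total (P i) (Q i) with h | h
    · rw [max_eq_right (by linarith), max_eq_left (by linarith)]; ring
    · rw [max_eq_left (by linarith), max_eq_right (by linarith)]; ring
  have hsum_sub : ∑ i, max (P i - Q i) 0 - ∑ i, max (Q i - P i) 0 = 0 := by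
    rw [← Finset.sum_sub_distrib,
      show (∑ i, (max (P i - Q i) 0 - max (Q i - P i) 0)) = ∑ i, (P i - Q i) from
        Finset.sum_congr rfl (fun i _ => hef_sub i),
      Finset.sum_sub_distrib, hP1, hQ1]
    ring
  have hsum_add : ∑ i, max (P i - Q i) 0 + ∑ i, max (Q i - P i) 0 = 2 * lam := by
    rw [← Finset.sum_add_distrib,
      show (∑ i, (max (P i - Q i) 0 + max (Q i - P i) 0)) = ∑ i, |P i - Q i| from
        Finset.sum_congr rfl (fun i _ => hef_abs i),
      hlamdef]
    ring
  have hesum : ∑ i, max (P i - Q i) 0 = lam := by linarith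
  have hfsum : ∑ i, max (Q i - P i) 0 = lam := by linarith
  have hr0 : ∀ i : A × B, 0 ≤ max (P i - Q i) 0 / lam := fun i => div_nonneg (he0 i) hlam.le
  have hs0 : ∀ i : A × B, 0 ≤ max (Q i - P i) 0 / lam := fun i => div_nonneg (hf0 i) hlam.le
  have hr1 : ∑ i : A × B, max (P i - Q i) 0 / lam = 1 := by
    rw [← Finset.sum_div, hesum, div_self hlamne]
  have hs1 : ∑ i : A × B, max (Q i - P i) 0 / lam = 1 := by
    rw [← Finset.sum_div, hfsum, div_self hlamne]
  have hal0 : (0:ℝ) < 1 / (1 + lam) := by positivity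
  have hbe0 : (0:ℝ) ≤ lam / (1 + lam) := by positivity
  have halbe : 1 / (1 + lam) + lam / (1 + lam) = 1 := by field_simp
  have hMeq : (fun i : A × B => 1 / (1 + lam) * P i + lam / (1 + lam) * (max (Q i - P i) 0 / lam))
      = (fun i : A × B => 1 / (1 + lam) * Q i + lam / (1 + lam) * (max (P i - Q i) 0 / lam)) := by
    funext i
    have h := hef_sub i
    field_simp
    linear_combination (-1 : ℝ) * h
  have hconc : (1 / (1 + lam)) * Fn P + (lam / (1 + lam)) * Fn (fun i => max (Q i - P i) 0 / lam)
      ≤ Fn (fun i : A × B => 1 / (1 + lam) * P i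
          + lam / (1 + lam) * (max (Q i - P i) 0 / lam)) :=
    Fn_concave2 P _ hP0 hs0 hal0.le hbe0
  have hupper : Fn (fun i : A × B => 1 / (1 + lam) * P i
        + lam / (1 + lam) * (max (Q i - P i) 0 / lam))
      ≤ (1 / (1 + lam)) * Fn Q + (lam / (1 + lam)) * Fn (fun i => max (P i - Q i) 0 / lam)
        + Real.negMulLog (1 / (1 + lam)) + Real.negMulLog (lam / (1 + lam)) := by
    rw [hMeq]
    have hHn : Hn (fun i : A × B => 1 / (1 + lam) * Q i
          + lam / (1 + lam) * (max (P i - Q i) 0 / lam))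
        ≤ (1 / (1 + lam)) * Hn Q + (lam / (1 + lam)) * Hn (fun i => max (P i - Q i) 0 / lam)
          + Real.negMulLog (1 / (1 + lam)) + Real.negMulLog (lam / (1 + lam)) :=
      Hn_mix_le Q _ hQ0 hr0 hQ1 hr1 hal0.le hbe0
    have hmargeq : margB (fun i : A × B => 1 / (1 + lam) * Q i
          + lam / (1 + lam) * (max (P i - Q i) 0 / lam))
        = fun b => 1 / (1 + lam) * margB Q b
            + lam / (1 + lam) * margB (fun i => max (P i - Q i) 0 / lam) b := by
      funext b
      exact margB_lin Q _ _ _ b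
    have hmarg : (1 / (1 + lam)) * Hn (margB Q)
          + (lam / (1 + lam)) * Hn (margB (fun i : A × B => max (P i - Q i) 0 / lam))
        ≤ Hn (margB (fun i : A × B => 1 / (1 + lam) * Q i
            + lam / (1 + lam) * (max (P i - Q i) 0 / lam))) := by
      rw [hmargeq]
      exact Hn_mix_ge (margB Q) _ (margB_nonneg Q hQ0) (margB_nonneg _ hr0) hal0.le hbe0 halbe
    rw [Fn, Fn, Fn]
    linarith
  have hFnr : Fn (fun i : A × B => max (P i - Q i) 0 / lam) ≤ L := Fn_le_card _ hr0 hr1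
  have hFns : 0 ≤ Fn (fun i : A × B => max (Q i - P i) 0 / lam) := Fn_nonneg _ hs0
  have hcomb : (1 / (1 + lam)) * Fn P ≤ (1 / (1 + lam)) * Fn Q + (lam / (1 + lam)) * L
      + Real.negMulLog (1 / (1 + lam)) + Real.negMulLog (lam / (1 + lam)) := by
    nlinarith [hconc, hupper, hbe0, hFnr, hFns]
  have hmul := mul_le_mul_of_nonneg_left hcomb h1lam.le
  have h3 : (1 + lam) * ((1 / (1 + lam)) * Fn P) = Fn P := by field_simp
  have h4 : (1 + lam) * ((1 / (1 + lam)) * Fn Q + (lam / (1 + lam)) * L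
        + Real.negMulLog (1 / (1 + lam)) + Real.negMulLog (lam / (1 + lam)))
      = Fn Q + lam * L + ((1 + lam) * Real.log (1 + lam) - lam * Real.log lam) := by
    rw [Real.negMulLog, Real.negMulLog, Real.log_div one_ne_zero h1lamne,
      Real.log_div hlamne h1lamne, Real.log_one]
    field_simp
    ring
  rw [h3, h4] at hmul
  linarith

lemma AF (P Q : A × B → ℝ) (hP0 : ∀ i, 0 ≤ P i) (hP1 : ∑ i, P i = 1)
    (hQ0 : ∀ i, 0 ≤ Q i) (hQ1 : ∑ i, Q i = 1)
    {lam : ℝ} (hlamdef : lam = (∑ i, |P i - Q i|) / 2) (hlam : 0 < lam) :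
    |Fn P - Fn Q| ≤ lam * Real.log (Fintype.card A)
      + ((1 + lam) * Real.log (1 + lam) - lam * Real.log lam) := by
  rw [abs_sub_le_iff]
  constructor
  · exact AF1 P Q hP0 hP1 hQ0 hQ1 hlamdef hlam
  · apply AF1 Q P hQ0 hQ1 hP0 hP1 _ hlam
    rw [hlamdef]
    congr 1
    exact Finset.sum_congr rfl (fun i _ => abs_sub_comm (P i) (Q i))

end AF

section MI

set_option linter.unusedSectionVars false

variable {W C : Type*} [Fintype W] [Fintype C]

noncomputable def margW (J : W × C → ℝ) : W → ℝ := fun w => ∑ z, J (w, z)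

lemma margW_sum (J : W × C → ℝ) : ∑ w, margW J w = ∑ i, J i := by
  rw [Fintype.sum_prod_type]; rfl

lemma le_margW (J : W × C → ℝ) (h0 : ∀ i, 0 ≤ J i) (w : W) (z : C) : J (w, z) ≤ margW J w :=
  Finset.single_le_sum (fun i _ => h0 (w, i)) (Finset.mem_univ z)

noncomputable def Tz (J : W × C → ℝ) (z : C) : ℝ :=
  ∑ w, J (w, z) * (Real.log (J (w, z)) - Real.log (margB J z) - Real.log (margW J w))

lemma Tz_nonneg (J : W × C → ℝ) (h0 : ∀ i, 0 ≤ J i) (h1 : ∑ i, J i = 1) (z : C) :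
    0 ≤ Tz J z := by
  have hls := logSum (Finset.univ : Finset W) (fun w => J (w, z))
    (fun w => margB J z * margW J w)
    (fun w _ => h0 (w, z))
    (fun w _ => mul_nonneg (margB_nonneg J h0 z) (Finset.sum_nonneg (fun i _ => h0 (w, i))))
    (by
      intro w _ h
      rcases mul_eq_zero.1 h with h' | h'
      · have := le_margB J h0 w z
        have h2 := h0 (w, z)
        linarith [this, h']
      · have := le_margW J h0 w z
        linarith [this, h', h0 (w, z)])
  have hsums : ∑ w, margB J z * margW J w = margB J z := by
    rw [← Finset.mul_sum, margW_sum, h1, mul_one]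
  rw [hsums] at hls
  have hLHS : (∑ w, J (w, z)) * (Real.log (∑ w, J (w, z)) - Real.log (margB J z)) = 0 := by
    have : ∑ w, J (w, z) = margB J z := rfl
    rw [this]; simp
  rw [hLHS] at hls
  have hcong : ∑ w, J (w, z) * (Real.log (J (w, z)) - Real.log (margB J z * margW J w))
      = Tz J z := by
    apply Finset.sum_congr rfl
    intro w _
    rcases eq_or_lt_of_le (h0 (w, z)) with h | h
    · rw [← h]; ring
    · have hB : 0 < margB J z := lt_of_lt_of_le h (le_margB J h0 w z)
      have hW : 0 < margW J w := lt_of_lt_of_le h (le_margW J h0 w z)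
      rw [Real.log_mul (ne_of_gt hB) (ne_of_gt hW)]
      ring
  rw [hcong] at hls
  exact hls

lemma Tz_sum (J : W × C → ℝ) :
    ∑ z, Tz J z = Hn (margW J) + Hn (margB J) - Hn J := by
  have e1 : ∑ z, ∑ w, J (w, z) * Real.log (J (w, z)) = -Hn J := by
    calc ∑ z, ∑ w, J (w, z) * Real.log (J (w, z))
        = ∑ z, ∑ w, -Real.negMulLog (J (w, z)) := by
          apply Finset.sum_congr rfl; intro z _
          apply Finset.sum_congr rfl; intro w _
          rw [Real.negMulLog]; ring
      _ = ∑ i : W × C, -Real.negMulLog (J i) :=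
          (Fintype.sum_prod_type_right (f := fun i : W × C => -Real.negMulLog (J i))).symm
      _ = -Hn J := by rw [Hn, ← Finset.sum_neg_distrib]
  have e2 : ∑ z, ∑ w, J (w, z) * Real.log (margB J z) = -Hn (margB J) := by
    rw [Hn, ← Finset.sum_neg_distrib]
    apply Finset.sum_congr rfl
    intro z _
    rw [← Finset.sum_mul, Real.negMulLog]
    simp only [margB]
    ring
  have e3 : ∑ z, ∑ w, J (w, z) * Real.log (margW J w) = -Hn (margW J) := by
    rw [Finset.sum_comm, Hn, ← Finset.sum_neg_distrib]
    apply Finset.sum_congr rfl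
    intro w _
    rw [← Finset.sum_mul, Real.negMulLog]
    simp only [margW]
    ring
  have expand : ∑ z, Tz J z
      = (∑ z, ∑ w, J (w, z) * Real.log (J (w, z)))
        - (∑ z, ∑ w, J (w, z) * Real.log (margB J z))
        - (∑ z, ∑ w, J (w, z) * Real.log (margW J w)) := by
    rw [← Finset.sum_sub_distrib, ← Finset.sum_sub_distrib]
    apply Finset.sum_congr rfl
    intro z _
    rw [Tz, ← Finset.sum_sub_distrib, ← Finset.sum_sub_distrib]
    apply Finset.sum_congr rfl
    intro w _
    ring
  rw [expand, e1, e2, e3]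
  ring

lemma Inat_nonneg (J : W × C → ℝ) (h0 : ∀ i, 0 ≤ J i) (h1 : ∑ i, J i = 1) :
    0 ≤ Hn (margW J) + Hn (margB J) - Hn J := by
  rw [← Tz_sum]
  exact Finset.sum_nonneg (fun z _ => Tz_nonneg J h0 h1 z)

lemma KL_le_Inat (J : W × C → ℝ) (h0 : ∀ i, 0 ≤ J i) (h1 : ∑ i, J i = 1)
    (z : C) (hz : 0 < margB J z) :
    ∑ w, (J (w, z) / margB J z) * (Real.log (J (w, z) / margB J z) - Real.log (margW J w))
      ≤ (Hn (margW J) + Hn (margB J) - Hn J) / margB J z := by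
  have hTle : Tz J z ≤ Hn (margW J) + Hn (margB J) - Hn J := by
    rw [← Tz_sum]
    exact Finset.single_le_sum (fun c _ => Tz_nonneg J h0 h1 c) (Finset.mem_univ z)
  have hKL : ∑ w, (J (w, z) / margB J z) * (Real.log (J (w, z) / margB J z)
      - Real.log (margW J w)) = Tz J z / margB J z := by
    rw [Tz, Finset.sum_div]
    apply Finset.sum_congr rfl
    intro w _
    rcases eq_or_lt_of_le (h0 (w, z)) with h | h
    · rw [← h]; simp
    · rw [Real.log_div (ne_of_gt h) (ne_of_gt hz)]
      field_simp
      try ring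
  rw [hKL]
  gcongr

end MI



section Prob

set_option linter.unusedSectionVars false

open Real

variable {Ω : Type*} [Fintype Ω]

lemma pr_eq_sum (μ : Ω → ℝ) (s : Set Ω) : pr μ s = ∑ ω, if ω ∈ s then μ ω else 0 :=
  Finset.sum_congr rfl (fun ω _ => Set.indicator_apply s μ ω)

lemma pr_congr (μ : Ω → ℝ) {s t : Set Ω} (h : ∀ ω, ω ∈ s ↔ ω ∈ t) : pr μ s = pr μ t := by
  rw [show s = t from Set.ext h]

lemma pr_nonneg (μ : Ω → ℝ) (hμ0 : ∀ ω, 0 ≤ μ ω) (s : Set Ω) : 0 ≤ pr μ s := by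
  rw [pr_eq_sum]
  apply Finset.sum_nonneg
  intro ω _
  split <;> simp [hμ0 ω]

lemma dst_nonneg (μ : Ω → ℝ) (hμ0 : ∀ ω, 0 ≤ μ ω) {γ : Type*} (g : Ω → γ) (c : γ) :
    0 ≤ dst μ g c := pr_nonneg μ hμ0 _

lemma sum_pr_fiber {γ : Type*} [Fintype γ] (μ : Ω → ℝ) (g : Ω → γ) (h : Ω → Prop) :
    ∑ c, pr μ {ω | g ω = c ∧ h ω} = pr μ {ω | h ω} := by
  simp only [pr_eq_sum]
  rw [Finset.sum_comm]
  apply Finset.sum_congr rfl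
  intro ω _
  by_cases hh : h ω
  · simp only [Set.mem_setOf_eq, hh, and_true]
    rw [Finset.sum_ite_eq Finset.univ (g ω) (fun _ => μ ω)]
    simp
  · simp [Set.mem_setOf_eq, hh]

lemma sum_dst {γ : Type*} [Fintype γ] (μ : Ω → ℝ) (g : Ω → γ) :
    ∑ c, dst μ g c = ∑ ω, μ ω := by
  have h1 : ∀ c, dst μ g c = pr μ {ω | g ω = c ∧ True} := by
    intro c
    apply pr_congr
    intro ω; simp [dst]
  have h2 : ∑ c, dst μ g c = pr μ {ω | True} := by
    rw [← sum_pr_fiber μ g (fun _ => True)]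
    exact Finset.sum_congr rfl (fun c _ => h1 c)
  rw [h2, pr_eq_sum]
  simp

lemma dst_isDist {γ : Type*} [Fintype γ] (μ : Ω → ℝ) (hμ : isDist μ) (g : Ω → γ) :
    isDist (dst μ g) :=
  ⟨fun c => dst_nonneg μ hμ.1 g c, by rw [sum_dst]; exact hμ.2⟩

/-- the joint distribution of `(g, Z)` has `Z`-marginal `dst μ Z`. -/
lemma margB_dst {γ δ : Type*} [Fintype γ] [Fintype δ] (μ : Ω → ℝ)
    (g : Ω → γ) (Z : Ω → δ) (z : δ) :
    margB (dst μ (fun ω => (g ω, Z ω))) z = dst μ Z z := by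
  rw [margB]
  have h1 : ∀ w, dst μ (fun ω => (g ω, Z ω)) (w, z) = pr μ {ω | g ω = w ∧ Z ω = z} := by
    intro w
    apply pr_congr
    intro ω
    simp [dst, Prod.ext_iff]
  rw [show (∑ w, dst μ (fun ω => (g ω, Z ω)) (w, z)) = ∑ w, pr μ {ω | g ω = w ∧ Z ω = z}
    from Finset.sum_congr rfl (fun w _ => h1 w)]
  rw [sum_pr_fiber μ g (fun ω => Z ω = z)]
  rfl

/-- the joint distribution of `(g, Z)` has `g`-marginal `dst μ g`. -/
lemma margW_dst {γ δ : Type*} [Fintype γ] [Fintype δ] (μ : Ω → ℝ)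
    (g : Ω → γ) (Z : Ω → δ) (w : γ) :
    margW (dst μ (fun ω => (g ω, Z ω))) w = dst μ g w := by
  rw [margW]
  have h1 : ∀ z, dst μ (fun ω => (g ω, Z ω)) (w, z) = pr μ {ω | Z ω = z ∧ g ω = w} := by
    intro z
    apply pr_congr
    intro ω
    simp only [Set.mem_setOf_eq, Prod.ext_iff]
    tauto
  rw [show (∑ z, dst μ (fun ω => (g ω, Z ω)) (w, z)) = ∑ z, pr μ {ω | Z ω = z ∧ g ω = w}
    from Finset.sum_congr rfl (fun z _ => h1 z)]
  rw [sum_pr_fiber μ Z (fun ω => g ω = w)]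
  rfl

lemma cnd_isDist (μ : Ω → ℝ) (hμ : isDist μ) (s : Set Ω) (hs : 0 < pr μ s) :
    isDist (cnd μ s) := by
  constructor
  · intro ω
    apply div_nonneg _ hs.le
    exact Set.indicator_apply_nonneg (fun _ => hμ.1 ω)
  · rw [show (∑ ω, cnd μ s ω) = (∑ ω, s.indicator μ ω) / pr μ s from (Finset.sum_div _ _ _).symm]
    rw [show (∑ ω, s.indicator μ ω) = pr μ s from rfl]
    field_simp

lemma dst_cnd {γ : Type*} (μ : Ω → ℝ) (s : Set Ω) (g : Ω → γ) (c : γ) :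
    dst (cnd μ s) g c = pr μ ({ω | g ω = c} ∩ s) / pr μ s := by
  rw [dst, pr_eq_sum, pr_eq_sum, Finset.sum_div]
  apply Finset.sum_congr rfl
  intro ω _
  by_cases h1 : g ω = c <;> by_cases h2 : ω ∈ s <;>
    simp [cnd, Set.indicator_apply, h1, h2, Set.mem_setOf_eq]

/-- entropy in bits equals `Hn` over `log 2`. -/
lemma entD_eq_Hn {γ : Type*} [Fintype γ] (q : γ → ℝ) : entD q = Hn q / Real.log 2 := by
  rw [entD, Hn, Finset.sum_div]
  apply Finset.sum_congr rfl
  intro c _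
  rw [Real.negMulLog, Real.logb]
  field_simp

lemma ent_eq_Hn {γ : Type*} [Fintype γ] (μ : Ω → ℝ) (g : Ω → γ) :
    ent μ g = Hn (dst μ g) / Real.log 2 := entD_eq_Hn _

/-- conditional entropy via `Fn` of the joint distribution. -/
lemma condEnt_eq_Fn {γ δ : Type*} [Fintype γ] [Fintype δ] (c : Ω → ℝ)
    (X : Ω → γ) (Y : Ω → δ) :
    condEnt c X Y = Fn (dst c (fun ω => (X ω, Y ω))) / Real.log 2 := by
  rw [condEnt, Fn, ent_eq_Hn, ent_eq_Hn]
  have : dst c Y = margB (dst c (fun ω => (X ω, Y ω))) := by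
    funext b
    rw [margB_dst]
  rw [this]
  ring

lemma Fn_card_one {A B : Type*} [Fintype A] [Fintype B] (hA : Fintype.card A = 1)
    (ν : A × B → ℝ) : Fn ν = 0 := by
  obtain ⟨a0, ha⟩ := Fintype.card_eq_one_iff.1 hA
  have huniv : (Finset.univ : Finset A) = {a0} := Finset.ext (fun x => by simp [ha x])
  have hmarg : ∀ b, margB ν b = ν (a0, b) := by
    intro b; rw [margB, huniv, Finset.sum_singleton]
  have hin : ∀ b, ∑ a, Real.negMulLog (ν (a, b)) = Real.negMulLog (ν (a0, b)) := by
    intro b; rw [huniv, Finset.sum_singleton]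
  rw [Fn, Hn_prod, sub_eq_zero]
  rw [show Hn (margB ν) = ∑ b, Real.negMulLog (margB ν b) from rfl]
  apply Finset.sum_congr rfl
  intro b _
  rw [hin b, hmarg b]

lemma sqrt_add_le {a b : ℝ} (ha : 0 ≤ a) (hb : 0 ≤ b) :
    Real.sqrt a + Real.sqrt b ≤ Real.sqrt (2 * (a + b)) := by
  rw [show Real.sqrt a + Real.sqrt b
      = Real.sqrt ((Real.sqrt a + Real.sqrt b)^2) from
        (Real.sqrt_sq (by positivity)).symm]
  apply Real.sqrt_le_sqrt
  nlinarith [Real.sq_sqrt ha, Real.sq_sqrt hb, sq_nonneg (Real.sqrt a - Real.sqrt b),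
    Real.sqrt_nonneg a, Real.sqrt_nonneg b]

lemma sqrt2_le : Real.sqrt 2 ≤ 1.41422 := by
  rw [show (1.41422:ℝ) = Real.sqrt (1.41422^2) from (Real.sqrt_sq (by norm_num)).symm]
  apply Real.sqrt_le_sqrt
  norm_num

end Prob


end OTAux

end OTAuxSection

open OTAux

set_option maxHeartbeats 2000000 in
/-- Ahlswede–Csiszár, Lemma 3: for `z₁, z₂` with positive probability,
`|H(X|Y, Z=z₁) − H(X|Y, Z=z₂)| ≤ 1 + 3 log₂|𝒳| √(((p+q) ln 2)/(2pq) · I((X,Y);Z))`. -/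
theorem statement3 {Ω A B C : Type*} [Fintype Ω] [Fintype A] [Fintype B] [Fintype C]
    (μ : Ω → ℝ) (hμ : isDist μ)
    (X : Ω → A) (Y : Ω → B) (Z : Ω → C)
    (z₁ z₂ : C) (hp : 0 < dst μ Z z₁) (hq : 0 < dst μ Z z₂) :
    |condEnt (cnd μ {ω | Z ω = z₁}) X Y - condEnt (cnd μ {ω | Z ω = z₂}) X Y|
      ≤ 1 + 3 * Real.logb 2 (Fintype.card A) *
          Real.sqrt ((dst μ Z z₁ + dst μ Z z₂) * Real.log 2
            / (2 * dst μ Z z₁ * dst μ Z z₂) * mi μ (fun ω => (X ω, Y ω)) Z) := by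
  classical
  obtain ⟨hμ0, hμ1⟩ := hμ
  have hlog2 : (0:ℝ) < Real.log 2 := Real.log_pos (by norm_num)
  have hΩ : Nonempty Ω := by
    by_contra h
    rw [not_nonempty_iff] at h
    rw [Finset.univ_eq_empty, Finset.sum_empty] at hμ1
    norm_num at hμ1
  have hAne : Nonempty A := ⟨X (Classical.arbitrary Ω)⟩
  have hcardA : 1 ≤ Fintype.card A := Fintype.card_pos
  -- the joint distribution of ((X,Y),Z)
  set J : (A × B) × C → ℝ := dst μ (fun ω => ((X ω, Y ω), Z ω)) with hJdef
  have hJ0 : ∀ i, 0 ≤ J i := fun i => dst_nonneg μ hμ0 _ i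
  have hJ1 : ∑ i, J i = 1 := by
    rw [hJdef, sum_dst, hμ1]
  have hBz : ∀ z, margB J z = dst μ Z z := fun z =>
    margB_dst μ (fun ω => (X ω, Y ω)) Z z
  have hWw : ∀ w, margW J w = dst μ (fun ω => (X ω, Y ω)) w := fun w =>
    margW_dst μ (fun ω => (X ω, Y ω)) Z w
  -- conditional joint distributions
  have hν : ∀ z : C, 0 < dst μ Z z →
      dst (cnd μ {ω | Z ω = z}) (fun ω => (X ω, Y ω))
        = fun w => J (w, z) / dst μ Z z := by
    intro z hz
    funext w
    rw [dst_cnd]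
    congr 1
    rw [hJdef]
    apply pr_congr
    intro ω
    simp [Set.mem_setOf_eq, Set.mem_inter_iff, Prod.ext_iff]
  rw [condEnt_eq_Fn, condEnt_eq_Fn, hν z₁ hp, hν z₂ hq]
  -- degenerate case |A| = 1
  rcases eq_or_lt_of_le hcardA with hA1 | hA2
  · rw [Fn_card_one hA1.symm, Fn_card_one hA1.symm]
    simp only [zero_div, sub_zero, abs_zero]
    rw [← hA1]
    push_cast
    rw [Real.logb_one]
    norm_num
  -- main case : |A| ≥ 2
  have hA2' : (2:ℝ) ≤ (Fintype.card A : ℝ) := by exact_mod_cast hA2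
  have hL1 : 1 ≤ Real.logb 2 (Fintype.card A) := by
    rw [Real.logb, le_div_iff₀ hlog2]
    have := Real.log_le_log (by norm_num : (0:ℝ) < 2) hA2'
    linarith
  set P : A × B → ℝ := fun w => J (w, z₁) / dst μ Z z₁ with hPdef
  set Q : A × B → ℝ := fun w => J (w, z₂) / dst μ Z z₂ with hQdef
  have hP0 : ∀ w, 0 ≤ P w := fun w => div_nonneg (hJ0 (w, z₁)) hp.le
  have hQ0 : ∀ w, 0 ≤ Q w := fun w => div_nonneg (hJ0 (w, z₂)) hq.le
  have hP1 : ∑ w, P w = 1 := by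
    rw [hPdef, ← Finset.sum_div,
      show (∑ w, J (w, z₁)) = margB J z₁ from rfl, hBz z₁, div_self (ne_of_gt hp)]
  have hQ1 : ∑ w, Q w = 1 := by
    rw [hQdef, ← Finset.sum_div,
      show (∑ w, J (w, z₂)) = margB J z₂ from rfl, hBz z₂, div_self (ne_of_gt hq)]
  -- goal normalization
  have habs : |Fn P / Real.log 2 - Fn Q / Real.log 2| = |Fn P - Fn Q| / Real.log 2 := by
    rw [show Fn P / Real.log 2 - Fn Q / Real.log 2 = (Fn P - Fn Q) / Real.log 2 by ring,
      abs_div, abs_of_pos hlog2]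
  rw [habs, div_le_iff₀ hlog2]
  -- total variation between P and Q
  set lam : ℝ := (∑ w, |P w - Q w|) / 2 with hlamdef
  have hlam0 : 0 ≤ lam := by
    rw [hlamdef]
    apply div_nonneg _ (by norm_num)
    exact Finset.sum_nonneg (fun w _ => abs_nonneg _)
  have hRHS0 : 0 ≤ 3 * Real.logb 2 (Fintype.card A) *
      Real.sqrt ((dst μ Z z₁ + dst μ Z z₂) * Real.log 2
        / (2 * dst μ Z z₁ * dst μ Z z₂) * mi μ (fun ω => (X ω, Y ω)) Z) := by
    apply mul_nonneg (by linarith) (Real.sqrt_nonneg _)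
  rcases eq_or_lt_of_le hlam0 with hlam | hlam
  · -- lam = 0 : P = Q
    have hPQ : P = Q := by
      funext w
      have hz : ∑ w, |P w - Q w| = 0 := by
        rw [hlamdef] at hlam; linarith
      have := (Finset.sum_eq_zero_iff_of_nonneg (fun w _ => abs_nonneg (P w - Q w))).1
        hz w (Finset.mem_univ w)
      have := abs_eq_zero.1 this
      linarith
    rw [hPQ, sub_self, abs_zero]
    positivity
  -- lam > 0 : the Alicki-Fannes bound
  have hAF := AF P Q hP0 hP1 hQ0 hQ1 hlamdef hlam
  have hlam1 : lam ≤ 1 := by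
    have hsum : ∑ w, |P w - Q w| ≤ 2 := by
      have h2 : ∑ w, |P w - Q w| ≤ ∑ w, (P w + Q w) := by
        apply Finset.sum_le_sum
        intro w _
        rw [abs_le]
        constructor <;> nlinarith [hP0 w, hQ0 w]
      rw [Finset.sum_add_distrib, hP1, hQ1] at h2
      linarith
    rw [hlamdef]; linarith
  have hgn := gnat_le hlam0 hlam1
  -- bound lam via Pinsker + the mutual information
  set Inat : ℝ := Hn (margW J) + Hn (margB J) - Hn J with hInatdef
  have hInat0 : 0 ≤ Inat := Inat_nonneg J hJ0 hJ1
  have hmi : mi μ (fun ω => (X ω, Y ω)) Z = Inat / Real.log 2 := by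
    simp only [mi]
    rw [ent_eq_Hn, ent_eq_Hn, ent_eq_Hn, ← hJdef,
      show dst μ (fun ω => (X ω, Y ω)) = margW J from (funext hWw).symm,
      show dst μ Z = margB J from (funext hBz).symm, hInatdef]
    ring
  have hM0 : ∀ w, 0 ≤ margW J w := fun w => Finset.sum_nonneg (fun z _ => hJ0 (w, z))
  have hM1 : ∑ w, margW J w = 1 := by rw [margW_sum, hJ1]
  -- Pinsker for z₁
  have hpins : ∀ (z : C) (hz : 0 < dst μ Z z),
      ∑ w, |J (w, z) / dst μ Z z - margW J w| ≤ Real.sqrt (2 * (Inat / dst μ Z z)) := by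
    intro z hz
    have hz' : 0 < margB J z := by rw [hBz z]; exact hz
    have hac : ∀ w, margW J w = 0 → J (w, z) / dst μ Z z = 0 := by
      intro w h
      have h1 := le_margW J hJ0 w z
      have h2 := hJ0 (w, z)
      have : J (w, z) = 0 := by linarith [h1, h]
      rw [this, zero_div]
    have hz0 : ∀ w, 0 ≤ J (w, z) / dst μ Z z := fun w => div_nonneg (hJ0 (w, z)) hz.le
    have hz1 : ∑ w, J (w, z) / dst μ Z z = 1 := by
      rw [← Finset.sum_div, show (∑ w, J (w, z)) = margB J z from rfl, hBz z,
        div_self (ne_of_gt hz)]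
    have hpk := pinsker (fun w => J (w, z) / dst μ Z z) (margW J) hz0 hz1 hM0 hM1 hac
    have hKL := KL_le_Inat J hJ0 hJ1 z hz'
    rw [hBz z] at hKL
    calc ∑ w, |J (w, z) / dst μ Z z - margW J w|
        ≤ Real.sqrt (2 * ∑ w, (J (w, z) / dst μ Z z) *
            (Real.log (J (w, z) / dst μ Z z) - Real.log (margW J w))) := hpk
      _ ≤ Real.sqrt (2 * (Inat / dst μ Z z)) := by
          apply Real.sqrt_le_sqrt
          rw [hInatdef]
          nlinarith [hKL]
  have htri : 2 * lam ≤ Real.sqrt (2 * (Inat / dst μ Z z₁))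
      + Real.sqrt (2 * (Inat / dst μ Z z₂)) := by
    have h1 : ∑ w, |P w - Q w| ≤ (∑ w, |P w - margW J w|) + ∑ w, |Q w - margW J w| := by
      rw [← Finset.sum_add_distrib]
      apply Finset.sum_le_sum
      intro w _
      calc |P w - Q w| ≤ |P w - margW J w| + |margW J w - Q w| :=
            abs_sub_le (P w) (margW J w) (Q w)
        _ = |P w - margW J w| + |Q w - margW J w| := by rw [abs_sub_comm (margW J w) (Q w)]
    have h2 := hpins z₁ hp
    have h3 := hpins z₂ hq
    rw [hlamdef]
    rw [hPdef, hQdef] at h1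
    linarith [h1, h2, h3]
  have hlam_sqrt : lam ≤ Real.sqrt (Inat / dst μ Z z₁ + Inat / dst μ Z z₂) := by
    have h4 := sqrt_add_le (a := 2 * (Inat / dst μ Z z₁)) (b := 2 * (Inat / dst μ Z z₂))
      (by positivity) (by positivity)
    have h5 : 2 * (2 * (Inat / dst μ Z z₁) + 2 * (Inat / dst μ Z z₂))
        = 2^2 * (Inat / dst μ Z z₁ + Inat / dst μ Z z₂) := by ring
    rw [h5, Real.sqrt_mul (by norm_num : (0:ℝ) ≤ 2^2) _,
      Real.sqrt_sq (show (0:ℝ) ≤ 2 by norm_num)] at h4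
    linarith [htri, h4]
  -- identify the sqrt argument
  set Dv : ℝ := Real.sqrt ((dst μ Z z₁ + dst μ Z z₂) * Real.log 2
      / (2 * dst μ Z z₁ * dst μ Z z₂) * mi μ (fun ω => (X ω, Y ω)) Z) with hDdef
  have hD0 : 0 ≤ Dv := Real.sqrt_nonneg _
  have harg : 2 * ((dst μ Z z₁ + dst μ Z z₂) * Real.log 2
      / (2 * dst μ Z z₁ * dst μ Z z₂) * mi μ (fun ω => (X ω, Y ω)) Z)
      = Inat / dst μ Z z₁ + Inat / dst μ Z z₂ := by
    rw [hmi]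
    field_simp
    ring
  have hlamD : lam ≤ Real.sqrt 2 * Dv := by
    rw [hDdef, ← Real.sqrt_mul (by norm_num : (0:ℝ) ≤ 2), harg]
    exact hlam_sqrt
  -- numerics
  have hs2 : Real.sqrt 2 ≤ 1.41422 := sqrt2_le
  have hs2pos : 0 < Real.sqrt 2 := Real.sqrt_pos.2 (by norm_num)
  have hs2sq : Real.sqrt 2 ^ 2 = 2 := Real.sq_sqrt (by norm_num)
  have hlog2lb : (0.6931471803:ℝ) ≤ Real.log 2 := Real.log_two_gt_d9.le
  -- final arithmetic
  set L2 : ℝ := Real.logb 2 (Fintype.card A) with hL2def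
  have hlogcard : Real.log (Fintype.card A) = L2 * Real.log 2 := by
    rw [hL2def, Real.logb]
    field_simp
  rw [hlogcard] at hAF
  -- |Fn P - Fn Q| ≤ lam * (L2 * log 2) + ((1+lam) log(1+lam) - lam log lam)
  --               ≤ lam * L2 * log 2 + log 2 + 0.777 lam
  have hkey : lam * (L2 * Real.log 2) + (Real.log 2 + 0.777 * lam)
      ≤ (1 + 3 * L2 * Dv) * Real.log 2 := by
    have hc1 : 0.777 * lam ≤ (3 / Real.sqrt 2 - 1) * Real.log 2 * lam := by
      apply mul_le_mul_of_nonneg_right _ hlam0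
      have h32 : (2.1213:ℝ) ≤ 3 / Real.sqrt 2 := by
        rw [le_div_iff₀ hs2pos]
        nlinarith [hs2]
      nlinarith [hlog2lb, h32]
    have hc2 : (3 / Real.sqrt 2 - 1) * Real.log 2 * lam ≤ (3 / Real.sqrt 2 - 1) * Real.log 2 * lam * L2 := by
      have hfac : 0 ≤ (3 / Real.sqrt 2 - 1) * Real.log 2 * lam := by
        apply mul_nonneg (mul_nonneg _ hlog2.le) hlam0
        have : (1:ℝ) ≤ 3 / Real.sqrt 2 := by
          rw [le_div_iff₀ hs2pos]
          nlinarith [hs2]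
        linarith
      nlinarith [hfac, hL1]
    have hc3 : lam * (L2 * Real.log 2) + (3 / Real.sqrt 2 - 1) * Real.log 2 * lam * L2
        = (3 / Real.sqrt 2) * lam * L2 * Real.log 2 := by ring
    have hc4 : (3 / Real.sqrt 2) * lam * L2 * Real.log 2 ≤ 3 * Dv * L2 * Real.log 2 := by
      have h6 : (3 / Real.sqrt 2) * lam ≤ 3 * Dv := by
        rw [div_mul_eq_mul_div, div_le_iff₀ hs2pos]
        calc 3 * lam ≤ 3 * (Real.sqrt 2 * Dv) := by nlinarith [hlamD]
          _ = 3 * Dv * Real.sqrt 2 := by ring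
      have h7 : 0 ≤ L2 * Real.log 2 := mul_nonneg (by linarith) hlog2.le
      nlinarith [h6, h7]
    nlinarith [hc1, hc2, hc3, hc4]
  calc |Fn P - Fn Q| ≤ lam * (L2 * Real.log 2)
        + ((1 + lam) * Real.log (1 + lam) - lam * Real.log lam) := hAF
    _ ≤ lam * (L2 * Real.log 2) + (Real.log 2 + 0.777 * lam) := by linarith [hgn]
    _ ≤ (1 + 3 * L2 * Dv) * Real.log 2 := hkey
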